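/- Let σ > 0, ν ≥ 0, θ ∈ ℝ, and let X and Y be independent real Gaussian random variables with means ν·cos θ and ν·sin θ respectively and common variance σ². Then for every t ≥ 0, P(X² + Y² ≥ t²) = ∫_t^∞ (x/σ²)·exp(−(x² + ν²)/(2σ²))·I₀(ν x/σ²) dx, where I₀(z) := (1/(2π))·∫_0^{2π} exp(z·cos φ) dφ. In particular, the left-hand side does not depend on the phase θ. -/

import Mathlib

open MeasureTheory ProbabilityTheory

/-- The zeroth-order modified Bessel function of the first kind, via its
integral representation `I₀(z) = (1/(2π)) ∫_0^{2π} exp(z cos φ) dφ`. -/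
noncomputable def besselI0 (z : ℝ) : ℝ :=
  (1 / (2 * Real.pi)) * ∫ φ in (0 : ℝ)..(2 * Real.pi), Real.exp (z * Real.cos φ)

open Real Set
open scoped ENNReal NNReal

lemma my_withDensity_prod {α β : Type*} [MeasurableSpace α] [MeasurableSpace β]
    {μ : Measure α} {ν : Measure β} [SigmaFinite μ] [SigmaFinite ν]
    {f : α → ℝ≥0∞} {g : β → ℝ≥0∞} (hf : Measurable f) (hg : Measurable g)
    [SigmaFinite (μ.withDensity f)] [SigmaFinite (ν.withDensity g)] :
    (μ.withDensity f).prod (ν.withDensity g)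
      = (μ.prod ν).withDensity fun p => f p.1 * g p.2 := by
  refine (Measure.prod_eq (μ := μ.withDensity f) (ν := ν.withDensity g) fun s t hs ht => ?_)
  rw [withDensity_apply _ (hs.prod ht), withDensity_apply _ hs, withDensity_apply _ ht,
    ← Measure.prod_restrict, lintegral_prod_mul hf.aemeasurable hg.aemeasurable]

set_option maxHeartbeats 1000000 in
theorem stmt_6 {Ω : Type*} [MeasurableSpace Ω] (μ : Measure Ω)
    [IsProbabilityMeasure μ] (σ : ℝ) (hσ : 0 < σ) (ν : ℝ) (hν : 0 ≤ ν) (θ : ℝ)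
    (X Y : Ω → ℝ) (hXm : Measurable X) (hYm : Measurable Y)
    (hX : μ.map X = gaussianReal (ν * Real.cos θ) (σ ^ 2).toNNReal)
    (hY : μ.map Y = gaussianReal (ν * Real.sin θ) (σ ^ 2).toNNReal)
    (hXY : IndepFun X Y μ) :
    ∀ t : ℝ, 0 ≤ t →
      μ {ω | t ^ 2 ≤ X ω ^ 2 + Y ω ^ 2}
        = ENNReal.ofReal (∫ x in Set.Ici t,
            (x / σ ^ 2) * Real.exp (-(x ^ 2 + ν ^ 2) / (2 * σ ^ 2))
              * besselI0 (ν * x / σ ^ 2)) := by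
  intro t ht
  have hπ := Real.pi_pos
  have hσ2 : (0:ℝ) < σ ^ 2 := by positivity
  set v : NNReal := (σ ^ 2).toNNReal with hvdef
  have hv : v ≠ 0 := by
    simp [hvdef, Real.toNNReal_eq_zero, not_le, hσ2, hσ.ne']
  have hvr : (v : ℝ) = σ ^ 2 := Real.coe_toNNReal _ hσ2.le
  set m1 : ℝ := ν * Real.cos θ
  set m2 : ℝ := ν * Real.sin θ
  set pdf2 : ℝ × ℝ → ℝ :=
    fun p => gaussianPDFReal m1 v p.1 * gaussianPDFReal m2 v p.2 with hpdf2def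
  set A : Set (ℝ × ℝ) := {p | t ^ 2 ≤ p.1 ^ 2 + p.2 ^ 2} with hAdef
  have hA : MeasurableSet A := by
    apply measurableSet_le <;> fun_prop
  -- Step 1 : the probability as a product gaussian measure
  have h1 : μ {ω | t ^ 2 ≤ X ω ^ 2 + Y ω ^ 2}
      = ((gaussianReal m1 v).prod (gaussianReal m2 v)) A := by
    rw [← hX, ← hY,
      ← (indepFun_iff_map_prod_eq_prod_map_map hXm.aemeasurable hYm.aemeasurable).mp hXY,
      Measure.map_apply (hXm.prodMk hYm) hA]
    rfl
  -- Step 2 : express via the joint density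
  have h2 : ((gaussianReal m1 v).prod (gaussianReal m2 v)) A
      = ∫⁻ p in A, ENNReal.ofReal (pdf2 p) := by
    have i1 : SigmaFinite (volume.withDensity (gaussianPDF m1 v)) := by
      rw [← gaussianReal_of_var_ne_zero _ hv]; infer_instance
    have i2 : SigmaFinite (volume.withDensity (gaussianPDF m2 v)) := by
      rw [← gaussianReal_of_var_ne_zero _ hv]; infer_instance
    rw [gaussianReal_of_var_ne_zero _ hv, gaussianReal_of_var_ne_zero _ hv,
      my_withDensity_prod (measurable_gaussianPDF _ _) (measurable_gaussianPDF _ _),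
      withDensity_apply _ hA]
    refine setLIntegral_congr_fun hA (fun p _ => ?_)
    rw [hpdf2def]
    simp only [gaussianPDF]
    rw [← ENNReal.ofReal_mul (gaussianPDFReal_nonneg _ _ _)]
  -- Step 3 : lintegral to integral
  have hpdfint : Integrable pdf2 (volume.prod volume) :=
    (integrable_gaussianPDFReal m1 v).mul_prod (integrable_gaussianPDFReal m2 v)
  have h3 : ∫⁻ p in A, ENNReal.ofReal (pdf2 p)
      = ENNReal.ofReal (∫ p in A, pdf2 p) := by
    exact (ofReal_integral_eq_lintegral_ofReal hpdfint.restrict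
      (Filter.Eventually.of_forall fun p =>
        mul_nonneg (gaussianPDFReal_nonneg _ _ _) (gaussianPDFReal_nonneg _ _ _))).symm
  rw [h1, h2, h3]
  congr 1
  -- now a purely real-integral identity
  -- the polar-coordinates integrand
  set F : ℝ → ℝ → ℝ := fun r φ => r * pdf2 (r * Real.cos φ, r * Real.sin φ) with hFdef
  set K : ℝ → ℝ := fun x => (x / σ ^ 2) * Real.exp (-(x ^ 2 + ν ^ 2) / (2 * σ ^ 2))
      * besselI0 (ν * x / σ ^ 2) with hKdef
  -- pointwise polar formula for the density
  have hpdf : ∀ r φ : ℝ, pdf2 (r * Real.cos φ, r * Real.sin φ)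
      = (2 * π * σ ^ 2)⁻¹ * Real.exp (-(r ^ 2 + ν ^ 2) / (2 * σ ^ 2))
        * Real.exp ((ν * r / σ ^ 2) * Real.cos (φ - θ)) := by
    intro r φ
    have h1' := Real.cos_sq_add_sin_sq φ
    have h2' := Real.cos_sq_add_sin_sq θ
    have hexp : -(r * Real.cos φ - m1) ^ 2 / (2 * σ ^ 2)
          + -(r * Real.sin φ - m2) ^ 2 / (2 * σ ^ 2)
        = -(r ^ 2 + ν ^ 2) / (2 * σ ^ 2) + (ν * r / σ ^ 2) * Real.cos (φ - θ) := by
      rw [Real.cos_sub]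
      have : (ν * r / σ ^ 2) * (Real.cos φ * Real.cos θ + Real.sin φ * Real.sin θ)
          = (2 * (ν * r * (Real.cos φ * Real.cos θ + Real.sin φ * Real.sin θ))) / (2 * σ ^ 2) := by
        field_simp
      rw [this, ← add_div, ← add_div]
      congr 1
      simp only [m1, m2]
      linear_combination (-(r ^ 2)) * h1' + (-(ν ^ 2)) * h2'
    have hs : Real.sqrt (2 * π * (v : ℝ)) * Real.sqrt (2 * π * (v : ℝ)) = 2 * π * σ ^ 2 := by
      rw [Real.mul_self_sqrt (by positivity), hvr]
    calc pdf2 (r * Real.cos φ, r * Real.sin φ)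
        = ((Real.sqrt (2 * π * (v : ℝ)))⁻¹ * (Real.sqrt (2 * π * (v : ℝ)))⁻¹)
            * (Real.exp (-(r * Real.cos φ - m1) ^ 2 / (2 * (v : ℝ)))
              * Real.exp (-(r * Real.sin φ - m2) ^ 2 / (2 * (v : ℝ)))) := by
          simp only [hpdf2def, gaussianPDFReal]
          ring
      _ = (2 * π * σ ^ 2)⁻¹ * Real.exp (-(r ^ 2 + ν ^ 2) / (2 * σ ^ 2))
            * Real.exp ((ν * r / σ ^ 2) * Real.cos (φ - θ)) := by
          rw [← mul_inv, hs, ← Real.exp_add, hvr, hexp, Real.exp_add]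
          ring
  -- the angular integral gives the Bessel function
  have hbessel : ∀ a : ℝ, (∫ φ in Ioo (-π) π, Real.exp (a * Real.cos (φ - θ)))
      = 2 * π * besselI0 a := by
    intro a
    have hper : Function.Periodic (fun x => Real.exp (a * Real.cos x)) (2 * π) := fun x => by
      simp [Real.cos_add_two_pi]
    have e1 : (∫ φ in Ioo (-π) π, Real.exp (a * Real.cos (φ - θ)))
        = ∫ φ in (-π)..π, Real.exp (a * Real.cos (φ - θ)) := by
      rw [intervalIntegral.integral_of_le (by linarith), ← setIntegral_congr_set Ioo_ae_eq_Ioc]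
    rw [e1, intervalIntegral.integral_comp_sub_right (fun x => Real.exp (a * Real.cos x)) θ]
    have e2 : (∫ x in (-π - θ)..(π - θ), Real.exp (a * Real.cos x))
        = ∫ x in (0:ℝ)..(2 * π), Real.exp (a * Real.cos x) := by
      have := hper.intervalIntegral_add_eq (-π - θ) 0
      simpa [show -π - θ + 2 * π = π - θ by ring] using this
    rw [e2, besselI0]
    field_simp
  -- the inner integral
  have hinner : ∀ r : ℝ, (∫ φ in Ioo (-π) π, F r φ) = K r := by
    intro r
    have : (fun φ => F r φ) = fun φ =>
        (r * ((2 * π * σ ^ 2)⁻¹ * Real.exp (-(r ^ 2 + ν ^ 2) / (2 * σ ^ 2))))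
          * Real.exp ((ν * r / σ ^ 2) * Real.cos (φ - θ)) := by
      funext φ
      rw [hFdef]
      simp only
      rw [hpdf r φ]
      ring
    rw [this, integral_const_mul, hbessel, hKdef]
    field_simp
  -- the integrand after polar change of variables
  set H : ℝ × ℝ → ℝ := fun p => (Ici t).indicator (fun r => F r p.2) p.1 with hHdef
  have hFcont : Continuous fun p : ℝ × ℝ => F p.1 p.2 := by
    simp only [hFdef, hpdf2def, gaussianPDFReal_def]
    fun_prop
  have hHind : H = (Ici t ×ˢ (univ : Set ℝ)).indicator (fun p => F p.1 p.2) := by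
    funext p
    by_cases h : t ≤ p.1 <;>
      simp [hHdef, Set.indicator_apply, h]
  have hHmeas : Measurable H := by
    rw [hHind]
    exact hFcont.measurable.indicator (measurableSet_Ici.prod MeasurableSet.univ)
  -- polar change of variables
  have h4 : (∫ p in A, pdf2 p)
      = ∫ p in polarCoord.target, p.1 • (A.indicator pdf2) (polarCoord.symm p) := by
    rw [integral_comp_polarCoord_symm (A.indicator pdf2), integral_indicator hA]
  have h5 : (∫ p in polarCoord.target, p.1 • (A.indicator pdf2) (polarCoord.symm p))
      = ∫ p in (Ioi (0:ℝ)) ×ˢ Ioo (-π) π, H p := by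
    rw [show polarCoord.target = (Ioi (0:ℝ)) ×ˢ Ioo (-π) π from rfl]
    refine setIntegral_congr_fun (measurableSet_Ioi.prod measurableSet_Ioo) fun p hp => ?_
    have hp1 : (0:ℝ) < p.1 := hp.1
    have hsymm : polarCoord.symm p = (p.1 * Real.cos p.2, p.1 * Real.sin p.2) := rfl
    have hmem : (p.1 * Real.cos p.2, p.1 * Real.sin p.2) ∈ A ↔ t ≤ p.1 := by
      simp only [hAdef, Set.mem_setOf_eq]
      have hsq : (p.1 * Real.cos p.2) ^ 2 + (p.1 * Real.sin p.2) ^ 2 = p.1 ^ 2 := by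
        have h := Real.cos_sq_add_sin_sq p.2
        linear_combination p.1 ^ 2 * h
      rw [hsq]
      constructor
      · intro h; nlinarith
      · intro h; nlinarith
    simp only [hHdef, hFdef, Set.indicator_apply, hsymm, hmem, smul_eq_mul, Set.mem_Ici]
    split_ifs
    · rfl
    · exact mul_zero _
  -- integrability on the polar box
  have hfin : IsFiniteMeasure (volume.restrict (Ioo (-π) π)) := by
    constructor
    rw [Measure.restrict_apply_univ]
    simp [Real.volume_Ioo]
  have hint0 : Integrable (fun r : ℝ => r * Real.exp (-(2 * σ ^ 2)⁻¹ * (r - ν) ^ 2)) volume := by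
    have h' : Integrable (fun r : ℝ => (r + ν) * Real.exp (-(2 * σ ^ 2)⁻¹ * r ^ 2)) volume := by
      have := (integrable_mul_exp_neg_mul_sq (b := (2 * σ ^ 2)⁻¹) (by positivity)).add
        ((integrable_exp_neg_mul_sq (b := (2 * σ ^ 2)⁻¹) (by positivity)).const_mul ν)
      simpa [add_mul, mul_comm, Pi.add_def] using this
    have := h'.comp_sub_right ν
    simpa [sub_add_cancel] using this
  set bnd : ℝ → ℝ := fun r => (2 * π * σ ^ 2)⁻¹ * (r * Real.exp (-(2 * σ ^ 2)⁻¹ * (r - ν) ^ 2))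
    with hbnddef
  have hbndcont : Continuous bnd := by
    simp only [hbnddef]
    fun_prop
  have hbnd : Integrable bnd (volume.restrict (Ioi 0)) := (hint0.const_mul _).restrict
  have hFbound : ∀ p : ℝ × ℝ, 0 < p.1 → 0 ≤ F p.1 p.2 ∧ F p.1 p.2 ≤ bnd p.1 := by
    intro p hp1
    have hcos : Real.cos (p.2 - θ) ≤ 1 := Real.cos_le_one _
    have ha : (0:ℝ) ≤ ν * p.1 / σ ^ 2 := by positivity
    have hexple : Real.exp (-(p.1 ^ 2 + ν ^ 2) / (2 * σ ^ 2))
          * Real.exp ((ν * p.1 / σ ^ 2) * Real.cos (p.2 - θ))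
        ≤ Real.exp (-(2 * σ ^ 2)⁻¹ * (p.1 - ν) ^ 2) := by
      rw [← Real.exp_add]
      apply Real.exp_le_exp.2
      have h1 : (ν * p.1 / σ ^ 2) * Real.cos (p.2 - θ) ≤ ν * p.1 / σ ^ 2 := by
        nlinarith
      have h2 : -(p.1 ^ 2 + ν ^ 2) / (2 * σ ^ 2) + ν * p.1 / σ ^ 2
          = -(2 * σ ^ 2)⁻¹ * (p.1 - ν) ^ 2 := by
        field_simp
        ring
      linarith
    constructor
    · rw [hFdef]
      simp only
      rw [hpdf]
      positivity
    · rw [hFdef]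
      simp only
      rw [hpdf, hbnddef]
      simp only
      have h3 : (0:ℝ) ≤ (2 * π * σ ^ 2)⁻¹ := by positivity
      calc p.1 * ((2 * π * σ ^ 2)⁻¹ * Real.exp (-(p.1 ^ 2 + ν ^ 2) / (2 * σ ^ 2))
              * Real.exp ((ν * p.1 / σ ^ 2) * Real.cos (p.2 - θ)))
          = (2 * π * σ ^ 2)⁻¹ * (p.1 * (Real.exp (-(p.1 ^ 2 + ν ^ 2) / (2 * σ ^ 2))
              * Real.exp ((ν * p.1 / σ ^ 2) * Real.cos (p.2 - θ)))) := by ring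
        _ ≤ (2 * π * σ ^ 2)⁻¹ * (p.1 * Real.exp (-(2 * σ ^ 2)⁻¹ * (p.1 - ν) ^ 2)) := by
            apply mul_le_mul_of_nonneg_left _ h3
            exact mul_le_mul_of_nonneg_left hexple hp1.le
  have hHint : IntegrableOn H ((Ioi (0:ℝ)) ×ˢ Ioo (-π) π) (volume.prod volume) := by
    rw [IntegrableOn, ← Measure.prod_restrict]
    refine Integrable.mono' (g := fun p : ℝ × ℝ => bnd p.1) ?_ ?_ ?_
    · simpa using hbnd.mul_prod (integrable_const (1:ℝ))
    · exact hHmeas.aestronglyMeasurable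
    · rw [Measure.prod_restrict]
      refine (ae_restrict_iff' (measurableSet_Ioi.prod measurableSet_Ioo)).2
        (Filter.Eventually.of_forall fun p hp => ?_)
      have hb := hFbound p hp.1
      rw [Real.norm_eq_abs, hHdef]
      simp only [Set.indicator_apply]
      split_ifs
      · rw [abs_of_nonneg hb.1]; exact hb.2
      · simpa using le_trans hb.1 hb.2
  have h6 : (∫ p in (Ioi (0:ℝ)) ×ˢ Ioo (-π) π, H p)
      = ∫ r in Ioi (0:ℝ), ∫ φ in Ioo (-π) π, H (r, φ) := setIntegral_prod H hHint
  have h7 : ∀ r : ℝ, (∫ φ in Ioo (-π) π, H (r, φ)) = (Ici t).indicator K r := by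
    intro r
    by_cases h : t ≤ r
    · rw [show (Ici t).indicator K r = K r from Set.indicator_of_mem (Set.mem_Ici.2 h) K,
        ← hinner r]
      refine setIntegral_congr_fun measurableSet_Ioo fun φ _ => ?_
      simp [hHdef, Set.indicator_of_mem, h]
    · rw [show (Ici t).indicator K r = 0 from
        Set.indicator_of_notMem (by simpa using h) K]
      have hz : ∀ φ : ℝ, H (r, φ) = 0 := fun φ => by
        simp [hHdef, Set.indicator_of_notMem, h]
      simp [hz]
  have h8 : (∫ r in Ioi (0:ℝ), (Ici t).indicator K r) = ∫ x in Ici t, K x := by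
    rw [setIntegral_indicator measurableSet_Ici]
    apply setIntegral_congr_set
    rcases eq_or_lt_of_le ht with h | h
    · rw [← h, Set.inter_eq_self_of_subset_left Set.Ioi_subset_Ici_self]
      exact Ioi_ae_eq_Ici
    · have he : Ioi (0:ℝ) ∩ Ici t = Ici t :=
        Set.inter_eq_self_of_subset_right fun x hx => lt_of_lt_of_le h hx
      rw [he]
      exact Filter.EventuallyEq.rfl
  calc (∫ p in A, pdf2 p)
      = ∫ r in Ioi (0:ℝ), ∫ φ in Ioo (-π) π, H (r, φ) := by rw [h4, h5, h6]
    _ = ∫ r in Ioi (0:ℝ), (Ici t).indicator K r :=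
        setIntegral_congr_fun measurableSet_Ioi fun r _ => h7 r
    _ = ∫ x in Ici t, K x := h8
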